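/- Assume ∑_{j=1}^n (u_j − 1)² ≤ 1/16 and set α := 1/(50√n). Then the updated vectors x(α)_j := x_j + α√(x_j/s_j)·p_j and s(α)_j := s_j + α√(s_j/x_j)·q_j satisfy ∑_{j=1}^n (x(α)_j s(α)_j/((1−α)μ) − 1)² ≤ 1/4. In particular, the entropy-based predictor step with step length 1/(50√n) maps the neighborhood condition ‖Xs/μ − e‖₂ ≤ 1/4 to ‖X(α)s(α)/((1−α)μ) − e‖₂ ≤ 1/2. -/

import Mathlib

set_option maxHeartbeats 1000000 in

theorem stmt_15 (n : ℕ) (hn : 1 ≤ n) (x s : Fin n → ℝ)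
    (hx : ∀ j, 0 < x j) (hs : ∀ j, 0 < s j)
    (μ : ℝ) (hμ : μ = (∑ j, x j * s j) / n)
    (v u : Fin n → ℝ)
    (hv : ∀ j, v j = Real.sqrt (x j * s j))
    (hu : ∀ j, u j = x j * s j / μ)
    (δ : ℝ) (hδ : δ = (1 / (n : ℝ)) * ∑ j, u j * Real.log (u j))
    (w : Fin n → ℝ)
    (hw : ∀ j, w j = -v j + δ * v j - v j * Real.log (u j))
    (L : Submodule ℝ (Fin n → ℝ)) (p q : Fin n → ℝ)
    (hpL : p ∈ L) (hperp : ∀ y ∈ L, ∑ j, (w j - p j) * y j = 0)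
    (hq : ∀ j, q j = w j - p j)
    (hnbhd : ∑ j, (u j - 1) ^ 2 ≤ 1 / 16)
    (α : ℝ) (hα : α = 1 / (50 * Real.sqrt n))
    (xα sα : Fin n → ℝ)
    (hxα : ∀ j, xα j = x j + α * Real.sqrt (x j / s j) * p j)
    (hsα : ∀ j, sα j = s j + α * Real.sqrt (s j / x j) * q j) :
    ∑ j, (xα j * sα j / ((1 - α) * μ) - 1) ^ 2 ≤ 1 / 4 := by
  have hn0 : (0:ℝ) < n := by exact_mod_cast Nat.lt_of_lt_of_le Nat.zero_lt_one hn
  have hne : (Finset.univ : Finset (Fin n)).Nonempty := ⟨⟨0, hn⟩, Finset.mem_univ _⟩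
  have hμ0 : 0 < μ := by
    rw [hμ]
    exact div_pos (Finset.sum_pos (fun j _ => mul_pos (hx j) (hs j)) hne) hn0
  have hu0 : ∀ j, 0 < u j := fun j => by
    rw [hu]; exact div_pos (mul_pos (hx j) (hs j)) hμ0
  -- α facts
  have hsn : 1 ≤ Real.sqrt n := Real.one_le_sqrt.mpr (by exact_mod_cast hn)
  have hα0 : 0 < α := by rw [hα]; positivity
  have hα50 : α ≤ 1/50 := by
    rw [hα, div_le_div_iff₀ (by positivity) (by norm_num)]
    nlinarith
  have h1α : (49:ℝ)/50 ≤ 1 - α := by linarith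
  have h1α0 : (0:ℝ) < 1 - α := by linarith
  have hα2 : α^2 = 1/(2500 * n) := by
    rw [hα, div_pow, mul_pow, Real.sq_sqrt hn0.le]; norm_num
  -- neighborhood bounds
  have husq : ∀ j, (u j - 1)^2 ≤ 1/16 := fun j =>
    le_trans (Finset.single_le_sum (f := fun i => (u i - 1)^2)
      (fun i _ => sq_nonneg _) (Finset.mem_univ j)) hnbhd
  have hul : ∀ j, 3/4 ≤ u j := fun j => by nlinarith [husq j]
  have huu : ∀ j, u j ≤ 5/4 := fun j => by nlinarith [husq j]
  set t : Fin n → ℝ := fun j => Real.log (u j) with ht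
  have hlog : ∀ j, (t j)^2 ≤ (16/9) * (u j - 1)^2 := by
    intro j
    have h1 : t j ≤ u j - 1 := Real.log_le_sub_one_of_pos (hu0 j)
    have h2 : u j - 1 ≤ u j * t j := by
      have h3 := Real.log_le_sub_one_of_pos (inv_pos.mpr (hu0 j))
      rw [Real.log_inv] at h3
      have hj := hu0 j
      have h4 : u j * (-t j) ≤ u j * ((u j)⁻¹ - 1) := mul_le_mul_of_nonneg_left h3 hj.le
      rw [mul_sub, mul_inv_cancel₀ hj.ne'] at h4
      nlinarith
    nlinarith [mul_nonneg (sub_nonneg.mpr h1) (sub_nonneg.mpr h2), sq_nonneg (u j - 1),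
      sq_nonneg (t j), sq_nonneg (t j - u j + 1),
      mul_nonneg (sub_nonneg.mpr (hul j)) (sq_nonneg (t j)), hul j, huu j]
  have hst : ∑ j, (t j)^2 ≤ 1/9 := by
    calc ∑ j, (t j)^2 ≤ ∑ j, (16/9) * (u j - 1)^2 := Finset.sum_le_sum fun j _ => hlog j
      _ = (16/9) * ∑ j, (u j - 1)^2 := by rw [Finset.mul_sum]
      _ ≤ (16/9) * (1/16) := by nlinarith
      _ = 1/9 := by norm_num
  -- bound on n δ²
  have hutsq : ∑ j, (u j * t j)^2 ≤ 25/144 := by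
    have hterm : ∀ j, (u j * t j)^2 ≤ (25/16) * (t j)^2 := by
      intro j
      have hu2 : (u j)^2 ≤ 25/16 := by nlinarith [hul j, huu j]
      nlinarith [mul_le_mul_of_nonneg_right hu2 (sq_nonneg (t j))]
    calc ∑ j, (u j * t j)^2 ≤ ∑ j, (25/16) * (t j)^2 := Finset.sum_le_sum fun j _ => hterm j
      _ = (25/16) * ∑ j, (t j)^2 := by rw [Finset.mul_sum]
      _ ≤ (25/16) * (1/9) := by nlinarith
      _ ≤ 25/144 := by norm_num
  have hδs : (n:ℝ) * δ = ∑ j, u j * t j := by rw [hδ]; field_simp; rfl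
  have hδ2 : (n:ℝ) * δ^2 ≤ 25/144 := by
    have hcs := Finset.sum_mul_sq_le_sq_mul_sq Finset.univ (fun _ : Fin n => (1:ℝ))
      (fun j => u j * t j)
    simp only [one_mul, one_pow, Finset.sum_const, Finset.card_univ, Fintype.card_fin,
      nsmul_eq_mul, mul_one] at hcs
    have h5 : ((n:ℝ) * δ)^2 ≤ (n:ℝ) * (25/144) := by
      rw [hδs]
      exact le_trans hcs (mul_le_mul_of_nonneg_left hutsq hn0.le)
    have h6 : (n:ℝ) * ((n:ℝ) * δ^2) ≤ (n:ℝ) * (25/144) := by nlinarith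
    exact le_of_mul_le_mul_left h6 hn0
  -- product formula
  have hv2 : ∀ j, v j ^ 2 = μ * u j := by
    intro j
    rw [hv, Real.sq_sqrt (mul_pos (hx j) (hs j)).le, hu]
    field_simp
  have hprod : ∀ j, xα j * sα j = μ * u j + α * (v j * (p j + q j)) + α^2 * (p j * q j) := by
    intro j
    have hxj := hx j; have hsj := hs j
    have e1 : Real.sqrt (x j / s j) * s j = v j := by
      rw [hv, show x j * s j = x j / s j * (s j)^2 by field_simp,
        Real.sqrt_mul (by positivity), Real.sqrt_sq hsj.le]
    have e2 : Real.sqrt (s j / x j) * x j = v j := by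
      rw [hv, show x j * s j = s j / x j * (x j)^2 by field_simp,
        Real.sqrt_mul (by positivity), Real.sqrt_sq hxj.le]
    have e3 : Real.sqrt (x j / s j) * Real.sqrt (s j / x j) = 1 := by
      rw [← Real.sqrt_mul (by positivity), show x j / s j * (s j / x j) = 1 by field_simp,
        Real.sqrt_one]
    have e4 : x j * s j = μ * u j := by rw [hu]; field_simp
    rw [hxα, hsα]
    calc (x j + α * Real.sqrt (x j / s j) * p j) * (s j + α * Real.sqrt (s j / x j) * q j)
        = x j * s j + α * ((Real.sqrt (x j / s j) * s j) * p j
            + (Real.sqrt (s j / x j) * x j) * q j)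
          + α^2 * (Real.sqrt (x j / s j) * Real.sqrt (s j / x j)) * (p j * q j) := by ring
      _ = μ * u j + α * (v j * (p j + q j)) + α^2 * (p j * q j) := by
          rw [e1, e2, e3, e4]; ring
  have hvw : ∀ j, v j * w j = μ * u j * (δ - 1 - t j) := by
    intro j
    rw [hw]
    have : v j * (-v j + δ * v j - v j * Real.log (u j))
        = v j ^ 2 * (δ - 1 - Real.log (u j)) := by ring
    rw [this, hv2]
  -- decomposition of the deviation
  have hwpq : ∀ j, w j = p j + q j := fun j => by rw [hq]; ring
  have hd : ∀ j, xα j * sα j / ((1 - α) * μ) - 1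
      = (u j - 1) + (α/(1-α)) * (u j * (δ - t j)) + (α^2/((1-α)*μ)) * (p j * q j) := by
    intro j
    rw [hprod, ← hwpq, hvw]
    field_simp
    ring
  -- sums of squares of the three parts
  have hSB : ∑ j, ((α/(1-α)) * (u j * (δ - t j)))^2 ≤ 1/400 := by
    have hc : (α/(1-α))^2 ≤ (1/49)^2 := by
      have h7 : α/(1-α) ≤ 1/49 := by
        rw [div_le_div_iff₀ h1α0 (by norm_num)]
        linarith
      have h8 : 0 ≤ α/(1-α) := by positivity
      exact pow_le_pow_left₀ h8 h7 2
    have hsum : ∑ j, (u j * (δ - t j))^2 ≤ 2 := by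
      have hterm : ∀ j, (u j * (δ - t j))^2 ≤ (25/8)*δ^2 + (25/8)*(t j)^2 := by
        intro j
        have hu2 : (u j)^2 ≤ 25/16 := by nlinarith [hul j, huu j]
        have h25 : (u j)^2 * (δ - t j)^2 ≤ (25/16) * (δ - t j)^2 :=
          mul_le_mul_of_nonneg_right hu2 (sq_nonneg _)
        nlinarith [sq_nonneg (δ + t j)]
      calc ∑ j, (u j * (δ - t j))^2 ≤ ∑ j, ((25/8)*δ^2 + (25/8)*(t j)^2) :=
            Finset.sum_le_sum fun j _ => hterm j
        _ = (n:ℝ) * ((25/8)*δ^2) + (25/8) * ∑ j, (t j)^2 := by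
            rw [Finset.sum_add_distrib, Finset.sum_const, Finset.card_univ, Fintype.card_fin,
              nsmul_eq_mul, ← Finset.mul_sum]
        _ ≤ 2 := by nlinarith
    calc ∑ j, ((α/(1-α)) * (u j * (δ - t j)))^2
        = (α/(1-α))^2 * ∑ j, (u j * (δ - t j))^2 := by
          rw [Finset.mul_sum]; exact Finset.sum_congr rfl fun j _ => by ring
      _ ≤ (1/49)^2 * 2 := by
          apply mul_le_mul hc hsum (Finset.sum_nonneg fun j _ => sq_nonneg _) (by positivity)
      _ ≤ 1/400 := by norm_num
  -- the cross-term sum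
  have hpq0 : ∑ j, p j * q j = 0 := by
    have := hperp p hpL
    rw [← this]
    exact Finset.sum_congr rfl fun j _ => by rw [hq]; ring
  have hSw : ∑ j, (w j)^2 ≤ 5 * μ * n := by
    have hterm : ∀ j, (w j)^2 ≤ μ * ((15/4)*δ^2 + 15/4) + μ * (15/4) * (t j)^2 := by
      intro j
      have h9 : (w j)^2 = (μ * u j) * (δ - 1 - t j)^2 := by
        have hv2j := hv2 j
        rw [hw]
        have he : (-v j + δ * v j - v j * Real.log (u j))^2
            = v j^2 * (δ - 1 - Real.log (u j))^2 := by ring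
        rw [he, hv2j]
      rw [h9]
      have h10 : (δ - 1 - t j)^2 ≤ 3*δ^2 + 3 + 3*(t j)^2 := by
        nlinarith [sq_nonneg (δ + 1), sq_nonneg (δ + t j), sq_nonneg (1 - t j),
          sq_nonneg (δ - 1 - t j)]
      have h11 : (μ * u j) * (δ - 1 - t j)^2 ≤ (μ * (5/4)) * (3*δ^2 + 3 + 3*(t j)^2) := by
        apply mul_le_mul ?_ h10 (sq_nonneg _) (by positivity)
        nlinarith [huu j, hμ0]
      nlinarith
    calc ∑ j, (w j)^2 ≤ ∑ j, (μ * ((15/4)*δ^2 + 15/4) + μ * (15/4) * (t j)^2) :=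
          Finset.sum_le_sum fun j _ => hterm j
      _ = (n:ℝ) * (μ * ((15/4)*δ^2 + 15/4)) + μ * (15/4) * ∑ j, (t j)^2 := by
          rw [Finset.sum_add_distrib, Finset.sum_const, Finset.card_univ, Fintype.card_fin,
            nsmul_eq_mul, ← Finset.mul_sum]
      _ ≤ 5 * μ * n := by
          have hn1 : (1:ℝ) ≤ n := by exact_mod_cast hn
          have hst' : μ * (15/4) * ∑ j, (t j)^2 ≤ μ * (15/4) * (1/9) :=
            mul_le_mul_of_nonneg_left hst (by positivity)
          have hδ2' : (n:ℝ) * (μ * ((15/4)*δ^2)) = μ * ((15/4) * ((n:ℝ)*δ^2)) := by ring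
          nlinarith [mul_le_mul_of_nonneg_left hδ2 (show (0:ℝ) ≤ μ * (15/4) by positivity),
            mul_pos hμ0 hn0, hμ0]
  have hSpq : ∑ j, (p j * q j)^2 ≤ (5*μ*n/2)^2 := by
    set Sp := ∑ j, (p j)^2 with hSp
    set Sq := ∑ j, (q j)^2 with hSq'
    have hSp0 : 0 ≤ Sp := Finset.sum_nonneg fun j _ => sq_nonneg _
    have hSq0 : 0 ≤ Sq := Finset.sum_nonneg fun j _ => sq_nonneg _
    have hpyth : Sp + Sq = ∑ j, (w j)^2 := by
      have h21 : ∑ j, (w j)^2 = ∑ j, ((p j)^2 + (q j)^2) + 2 * ∑ j, p j * q j := by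
        rw [Finset.mul_sum, ← Finset.sum_add_distrib]
        exact Finset.sum_congr rfl fun j _ => by rw [hwpq j]; ring
      rw [h21, hpq0, Finset.sum_add_distrib]
      ring
    have h12 : ∑ j, (p j * q j)^2 ≤ Sp * Sq := by
      have hterm : ∀ j, (p j * q j)^2 ≤ (p j)^2 * Sq := by
        intro j
        have : (q j)^2 ≤ Sq := Finset.single_le_sum (f := fun i => (q i)^2)
          (fun i _ => sq_nonneg _) (Finset.mem_univ j)
        calc (p j * q j)^2 = (p j)^2 * (q j)^2 := by ring
          _ ≤ (p j)^2 * Sq := mul_le_mul_of_nonneg_left this (sq_nonneg _)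
      calc ∑ j, (p j * q j)^2 ≤ ∑ j, (p j)^2 * Sq := Finset.sum_le_sum fun j _ => hterm j
        _ = Sp * Sq := by rw [← Finset.sum_mul]
    have h13 : Sp * Sq ≤ ((Sp + Sq)/2)^2 := by nlinarith [sq_nonneg (Sp - Sq)]
    have h14 : Sp + Sq ≤ 5*μ*n := by rw [hpyth]; exact hSw
    have h15 : ((Sp + Sq)/2)^2 ≤ (5*μ*n/2)^2 := by nlinarith
    linarith
  have hSC : ∑ j, ((α^2/((1-α)*μ)) * (p j * q j))^2 ≤ 1/400 := by
    have hk : (0:ℝ) ≤ (α^2/((1-α)*μ))^2 := sq_nonneg _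
    have h16 : ∑ j, ((α^2/((1-α)*μ)) * (p j * q j))^2
        = (α^2/((1-α)*μ))^2 * ∑ j, (p j * q j)^2 := by
      rw [Finset.mul_sum]; exact Finset.sum_congr rfl fun j _ => by ring
    rw [h16]
    have h17 : (α^2/((1-α)*μ))^2 * ∑ j, (p j * q j)^2
        ≤ (α^2/((1-α)*μ))^2 * (5*μ*n/2)^2 := mul_le_mul_of_nonneg_left hSpq hk
    have h18 : (α^2/((1-α)*μ))^2 * (5*μ*n/2)^2 = (α^2 * n)^2 * (25/4) / (1-α)^2 := by
      field_simp
      ring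
    have h19 : α^2 * (n:ℝ) = 1/2500 := by
      rw [hα2]; field_simp
    rw [h18, h19] at h17
    have h20 : (1/2500:ℝ)^2 * (25/4) / (1-α)^2 ≤ 1/400 := by
      rw [div_le_div_iff₀ (by positivity) (by norm_num)]
      nlinarith
    linarith
  -- combine
  have hfinal : ∀ j, (xα j * sα j / ((1 - α) * μ) - 1)^2
      ≤ (7/5)*(u j - 1)^2 + 7*((α/(1-α)) * (u j * (δ - t j)))^2
          + 7*((α^2/((1-α)*μ)) * (p j * q j))^2 := by
    intro j
    rw [hd]
    have key : ∀ A B C : ℝ, (A + B + C)^2 ≤ (7/5)*A^2 + 7*B^2 + 7*C^2 := by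
      intro A B C
      nlinarith [sq_nonneg (A - 5*B), sq_nonneg (A - 5*C), sq_nonneg (B - C)]
    exact key _ _ _
  calc ∑ j, (xα j * sα j / ((1 - α) * μ) - 1) ^ 2
      ≤ ∑ j, ((7/5)*(u j - 1)^2 + 7*((α/(1-α)) * (u j * (δ - t j)))^2
          + 7*((α^2/((1-α)*μ)) * (p j * q j))^2) := Finset.sum_le_sum fun j _ => hfinal j
    _ = (7/5) * (∑ j, (u j - 1)^2) + 7 * (∑ j, ((α/(1-α)) * (u j * (δ - t j)))^2)
        + 7 * (∑ j, ((α^2/((1-α)*μ)) * (p j * q j))^2) := by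
        rw [Finset.sum_add_distrib, Finset.sum_add_distrib, ← Finset.mul_sum, ← Finset.mul_sum,
          ← Finset.mul_sum]
    _ ≤ (7/5) * (1/16) + 7 * (1/400) + 7 * (1/400) := by nlinarith
    _ ≤ 1/4 := by norm_num
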